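/- (Existence of a pure strategy Nash equilibrium.) There exists a strategy profile a* : M → Bool such that for every player i ∈ M, q_i(a*) ≥ q_i(flip_i a*); i.e., the repercussion-utility game admits a pure strategy Nash equilibrium. -/

import Mathlib

/-- Flip the action of player `i` in profile `a`. -/
def flipProfile {M : Type*} [DecidableEq M] (i : M) (a : M → Bool) : M → Bool :=
  Function.update a i (!a i)

/-- Repercussion utility of player `i`. -/
noncomputable def repUtil {M : Type*} [DecidableEq M] (N : M → Finset M)
    (U : M → (M → Bool) → ℝ) (i : M) (a : M → Bool) : ℝ :=
  if a i then U i a + ∑ j ∈ N i, (U j a - U j (flipProfile i a)) else U i a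

lemma flip_apply_self {M : Type*} [DecidableEq M] (i : M) (a : M → Bool) :
    flipProfile i a i = !a i := by simp [flipProfile]

lemma flip_apply_ne {M : Type*} [DecidableEq M] {i j : M} (h : j ≠ i) (a : M → Bool) :
    flipProfile i a j = a j := by simp [flipProfile, Function.update_of_ne h]

lemma flipProfile_flip_flip {M : Type*} [DecidableEq M] (i : M) (a : M → Bool) :
    flipProfile i (flipProfile i a) = a := by
  funext j
  by_cases h : j = i
  · subst h; simp [flip_apply_self]
  · simp [flip_apply_ne h]

theorem exists_pure_nash_equilibrium
    {M : Type*} [Fintype M] [DecidableEq M] [Nonempty M]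
    (N : M → Finset M) (U : M → (M → Bool) → ℝ)
    (hself : ∀ i, i ∉ N i)
    (hsym : ∀ i j, j ∈ N i ↔ i ∈ N j)
    (hloc : ∀ i (a a' : M → Bool),
      (∀ j, j = i ∨ j ∈ N i → a j = a' j) → U i a = U i a') :
    ∃ astar : M → Bool, ∀ i : M,
      repUtil N U i astar ≥ repUtil N U i (flipProfile i astar) := by
  classical
  set Φ : (M → Bool) → ℝ := fun a => ∑ k, U k a with hΦ
  -- players outside {i} ∪ N i don't notice a flip of i
  have hzero : ∀ (i k : M) (a : M → Bool), k ≠ i → k ∉ N i →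
      U k a = U k (flipProfile i a) := by
    intro i k a hki hkN
    apply hloc k
    intro j hj
    have hji : j ≠ i := by
      intro hji
      rcases hj with h | h
      · exact hki (h ▸ hji)
      · exact hkN ((hsym k i).mp (hji ▸ h))
    exact (flip_apply_ne hji a).symm
  -- the potential difference equals the localized sum
  have hdiff : ∀ (i : M) (a : M → Bool),
      Φ a - Φ (flipProfile i a)
        = (U i a - U i (flipProfile i a)) + ∑ j ∈ N i, (U j a - U j (flipProfile i a)) := by
    intro i a
    have h1 : Φ a - Φ (flipProfile i a) = ∑ k, (U k a - U k (flipProfile i a)) := by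
      rw [hΦ]; rw [Finset.sum_sub_distrib]
    rw [h1]
    have hsub : insert i (N i) ⊆ Finset.univ := Finset.subset_univ _
    have hvan : ∀ k ∈ Finset.univ, k ∉ insert i (N i) →
        U k a - U k (flipProfile i a) = 0 := by
      intro k _ hk
      rw [Finset.mem_insert, not_or] at hk
      have := hzero i k a hk.1 hk.2
      linarith
    rw [← Finset.sum_subset hsub hvan, Finset.sum_insert (hself i)]
  -- pick a maximizer of the potential
  obtain ⟨astar, -, hmax⟩ := Finset.exists_max_image (Finset.univ : Finset (M → Bool)) Φ
    ⟨fun _ => true, Finset.mem_univ _⟩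
  refine ⟨astar, fun i => ?_⟩
  have hge : Φ astar ≥ Φ (flipProfile i astar) := hmax _ (Finset.mem_univ _)
  have hkey := hdiff i astar
  by_cases hi : astar i = true
  · have hfi : flipProfile i astar i = false := by simp [flip_apply_self, hi]
    rw [repUtil, repUtil, hi, hfi]
    simp only [if_true, Bool.false_eq_true, if_false]
    linarith
  · have hi' : astar i = false := by simpa using hi
    have hfi : flipProfile i astar i = true := by simp [flip_apply_self, hi']
    rw [repUtil, repUtil, hi', hfi]
    simp only [if_true, Bool.false_eq_true, if_false]
    have hff := flipProfile_flip_flip i astar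
    rw [hff]
    have hs : ∑ j ∈ N i, (U j (flipProfile i astar) - U j astar)
        = -∑ j ∈ N i, (U j astar - U j (flipProfile i astar)) := by
      rw [← Finset.sum_neg_distrib]
      exact Finset.sum_congr rfl (fun j _ => by ring)
    linarith
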